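/- For ε > 0, consider the energy E_ε(P) = Tr((P − M_ε)²) on the set 𝓜₁ of 2×2 real symmetric matrices P with P² = P and Tr(P) = 1, where M_ε = [[1, ε],[ε, 0]]. Set a(ε) = (1 − √(1 − 4ε²/(1+4ε²)))/2 and P(a,b) = [[1−a, b],[b, a]]. Then the minimum of E_ε over 𝓜₁ is attained at P(a(ε), √(a(ε)(1−a(ε)))), and for every a ∈ [0,1], E_ε(P(a, √(a(1−a)))) = 2(a + ε² − 2ε√(a(1−a))) ≤ E_ε(P(a, −√(a(1−a)))). -/

import Mathlib

open Matrix

section Aux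

private lemma energy_formula (ε a b : ℝ) :
    ((!![1 - a, b; b, a] - !![1, ε; ε, 0]) * (!![1 - a, b; b, a] - !![1, ε; ε, 0])).trace
      = 2 * a ^ 2 + 2 * (b - ε) ^ 2 := by
  have h : (!![1 - a, b; b, a] - !![(1:ℝ), ε; ε, 0]) = !![-a, b - ε; b - ε, a] := by
    ext i j; fin_cases i <;> fin_cases j <;> simp
  rw [h, Matrix.mul_fin_two, Matrix.trace_fin_two_of]
  ring

private lemma mem_M1 (a b : ℝ) (hb : b ^ 2 = a * (1 - a)) :
    (!![1 - a, b; b, a]).IsSymm ∧ !![1 - a, b; b, a] * !![1 - a, b; b, a] = !![1 - a, b; b, a]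
      ∧ (!![1 - a, b; b, a]).trace = 1 := by
  refine ⟨?_, ?_, ?_⟩
  · ext i j; fin_cases i <;> fin_cases j <;> simp [Matrix.IsSymm]
  · rw [Matrix.mul_fin_two]
    ext i j; fin_cases i <;> fin_cases j <;> simp <;> nlinarith [hb]
  · rw [Matrix.trace_fin_two_of]; ring

end Aux

/-- the tunable-gap toy model. For `ε > 0`, the energy
`E_ε(P) = Tr((P − M_ε)²)` with `M_ε = [[1, ε],[ε, 0]]` attains its minimum over the set
`𝓜₁` of 2×2 symmetric rank-one orthogonal projectors at `P(a(ε), √(a(ε)(1−a(ε))))`, with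
`a(ε) = (1 − √(1 − 4ε²/(1+4ε²)))/2`; moreover for every `a ∈ [0,1]`, on the branch
`b = +√(a(1−a))` the energy equals `2(a + ε² − 2ε√(a(1−a)))` and is no larger than on
the branch `b = −√(a(1−a))`. -/
theorem toy_model_minimizer (ε : ℝ) (hε : 0 < ε) :
    let M : Matrix (Fin 2) (Fin 2) ℝ := !![1, ε; ε, 0]
    let E : Matrix (Fin 2) (Fin 2) ℝ → ℝ := fun P => ((P - M) * (P - M)).trace
    let Pab : ℝ → ℝ → Matrix (Fin 2) (Fin 2) ℝ := fun a b => !![1 - a, b; b, a]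
    let M1 : Set (Matrix (Fin 2) (Fin 2) ℝ) :=
      {P | P.IsSymm ∧ P * P = P ∧ P.trace = 1}
    let aeps : ℝ := (1 - Real.sqrt (1 - 4 * ε ^ 2 / (1 + 4 * ε ^ 2))) / 2
    let Pmin : Matrix (Fin 2) (Fin 2) ℝ := Pab aeps (Real.sqrt (aeps * (1 - aeps)))
    Pmin ∈ M1 ∧
    (∀ P ∈ M1, E Pmin ≤ E P) ∧
    (∀ a : ℝ, 0 ≤ a → a ≤ 1 →
      E (Pab a (Real.sqrt (a * (1 - a)))) = 2 * (a + ε ^ 2 - 2 * ε * Real.sqrt (a * (1 - a))) ∧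
      E (Pab a (Real.sqrt (a * (1 - a)))) ≤ E (Pab a (-Real.sqrt (a * (1 - a))))) := by
  intro M E Pab M1 aeps Pmin
  -- basic facts about s = √(1+4ε²)
  set s := Real.sqrt (1 + 4 * ε ^ 2) with hs_def
  have hpos : (0:ℝ) < 1 + 4 * ε ^ 2 := by positivity
  have hs2 : s ^ 2 = 1 + 4 * ε ^ 2 := Real.sq_sqrt hpos.le
  have hs1 : 1 ≤ s := by nlinarith [Real.sqrt_nonneg (1 + 4 * ε ^ 2)]
  have hs0 : 0 < s := lt_of_lt_of_le one_pos hs1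
  -- simplify aeps
  have harg : 1 - 4 * ε ^ 2 / (1 + 4 * ε ^ 2) = 1 / (1 + 4 * ε ^ 2) := by
    field_simp
    ring
  have hsq : Real.sqrt (1 - 4 * ε ^ 2 / (1 + 4 * ε ^ 2)) = 1 / s := by
    rw [harg, one_div, Real.sqrt_inv, hs_def, one_div]
  have haeps : aeps = (1 - 1 / s) / 2 := by
    show (1 - Real.sqrt (1 - 4 * ε ^ 2 / (1 + 4 * ε ^ 2))) / 2 = _
    rw [hsq]
  have haeps_prod : aeps * (1 - aeps) = ε ^ 2 / s ^ 2 := by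
    rw [haeps]; field_simp; nlinarith [hs2]
  have hbmin : Real.sqrt (aeps * (1 - aeps)) = ε / s := by
    rw [haeps_prod, show ε ^ 2 / s ^ 2 = (ε / s) ^ 2 by ring,
      Real.sqrt_sq (by positivity)]
  have hbmin2 : (Real.sqrt (aeps * (1 - aeps))) ^ 2 = aeps * (1 - aeps) :=
    Real.sq_sqrt (by rw [haeps_prod]; positivity)
  -- energy of Pmin
  have hEmin : E Pmin = 1 - s + 2 * ε ^ 2 := by
    show ((Pab aeps _ - M) * (Pab aeps _ - M)).trace = _
    rw [energy_formula, hbmin, haeps]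
    field_simp
    linear_combination (2 * s - 1) * hs2
  refine ⟨?_, ?_, ?_⟩
  · exact mem_M1 aeps _ hbmin2
  · rintro P ⟨hsymm, hidem, htr⟩
    obtain ⟨a, b, hPeq, hb2⟩ : ∃ a b : ℝ, P = Pab a b ∧ b ^ 2 = a * (1 - a) := by
      refine ⟨P 1 1, P 0 1, ?_, ?_⟩
      · have h10 : P 1 0 = P 0 1 := hsymm.apply 0 1
        have h00 : P 0 0 = 1 - P 1 1 := by
          have := Matrix.trace_fin_two P
          rw [htr] at this
          linarith [this.symm]
        ext i j; fin_cases i <;> fin_cases j <;> simp [Pab, h00, h10]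
      · have h10 : P 1 0 = P 0 1 := hsymm.apply 0 1
        have h11 : (P * P) 1 1 = P 1 1 := by rw [hidem]
        rw [Matrix.mul_apply, Fin.sum_univ_two, h10] at h11
        nlinarith [h11]
    rw [hPeq]
    show E Pmin ≤ ((Pab a b - M) * (Pab a b - M)).trace
    rw [hEmin]
    show (1:ℝ) - s + 2 * ε ^ 2 ≤
      ((!![1 - a, b; b, a] - !![1, ε; ε, 0]) * (!![1 - a, b; b, a] - !![1, ε; ε, 0])).trace
    rw [energy_formula]
    clear hPeq hsymm hidem htr hbmin hbmin2 hEmin hsq haeps haeps_prod harg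
    have ht2 : (4 * ε * b - 2 * a + 1) ^ 2 ≤ s ^ 2 := by
      nlinarith [sq_nonneg (b + ε * (2 * a - 1)), hb2, hs2]
    have ht : 4 * ε * b - 2 * a + 1 ≤ s := by nlinarith [ht2, hs0]
    have hexp : 2 * a ^ 2 + 2 * (b - ε) ^ 2
        = 2 * a ^ 2 + 2 * b ^ 2 - 4 * (ε * b) + 2 * ε ^ 2 := by ring
    linarith [ht, hb2, hexp]
  · intro a ha0 ha1
    set b := Real.sqrt (a * (1 - a)) with hb_def
    have hb0 : 0 ≤ b := Real.sqrt_nonneg _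
    have hb2 : b ^ 2 = a * (1 - a) := Real.sq_sqrt (mul_nonneg ha0 (by linarith))
    constructor
    · show ((Pab a b - M) * (Pab a b - M)).trace = _
      rw [energy_formula]
      linear_combination 2 * hb2
    · show ((Pab a b - M) * (Pab a b - M)).trace ≤
        ((Pab a (-b) - M) * (Pab a (-b) - M)).trace
      rw [energy_formula, energy_formula]
      have hexp : 2 * a ^ 2 + 2 * (-b - ε) ^ 2 - (2 * a ^ 2 + 2 * (b - ε) ^ 2)
          = 8 * (ε * b) := by ring
      linarith [mul_nonneg hε.le hb0, hexp]
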